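/- With Q=343, A=202, B=1.9, C=3.04, α₁=0.32, α₂=0.62, α₀=0.47, s₂=−0.482, L=Q/(B+C), the function h₋(η) = F(η) − G₋(η) has exactly two zeros η*₋,u < η*₋,s in [0,1], with h₋′(η*₋,u) > 0 and h₋′(η*₋,s) < 0. Moreover, denoting by η*₊,u < η*₊,s the two zeros of h₊ = F − G₊ in [0,1], one has η*₊,u < η*₋,u < η*₋,s < η*₊,s. -/

import Mathlib

noncomputable section

namespace GlacialCycles

/-- Insolation `Q = 343` W/m². -/
def Qp : ℝ := 343
/-- OLR constant `A = 202`. -/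
def Ap : ℝ := 202
/-- OLR constant `B = 1.9`. -/
def Bp : ℝ := 1.9
/-- Transport constant `C = 3.04`. -/
def Cp : ℝ := 3.04
/-- Ice-free albedo `α₁ = 0.32`. -/
def α1p : ℝ := 0.32
/-- Ice albedo `α₂ = 0.62`. -/
def α2p : ℝ := 0.62
/-- `α₀ = (α₁+α₂)/2 = 0.47`. -/
def α0p : ℝ := 0.47
/-- `s₂ = −0.482`. -/
def s2p : ℝ := -0.482
/-- `L = Q/(B+C)`. -/
def Lp : ℝ := Qp / (Bp + Cp)

/-- Second even Legendre polynomial `p₂(η) = (3η²−1)/2`. -/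
def p2 (η : ℝ) : ℝ := (3*η^2 - 1)/2
/-- `P₂(η) = ∫₀^η p₂ = (η³−η)/2`. -/
def P2 (η : ℝ) : ℝ := (η^3 - η)/2

/-- `F(η) = (1/B)(Q(1−α₀) − A + C·L·(α₂−α₁)·(η − 1/2 + s₂ P₂(η)))`. -/
def F (η : ℝ) : ℝ :=
  (1/Bp) * (Qp*(1 - α0p) - Ap + Cp*Lp*(α2p - α1p)*(η - 1/2 + s2p * P2 η))

/-- `G_{T_c}(η) = −L s₂ (1−α₀) p₂(η) + T_c`. -/
def G (Tc η : ℝ) : ℝ := -Lp*s2p*(1 - α0p) * p2 η + Tc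

/-- `G₊ = G_{T_c}` with `T_c⁺ = −10`. -/
def Gplus (η : ℝ) : ℝ := G (-10) η
/-- `G₋ = G_{T_c}` with `T_c⁻ = −5.5`. -/
def Gminus (η : ℝ) : ℝ := G (-5.5) η

/-- `h₊ = F − G₊`. -/
def hplus (η : ℝ) : ℝ := F η - Gplus η
/-- `h₋ = F − G₋`. -/
def hminus (η : ℝ) : ℝ := F η - Gminus η

lemma hm_poly (η : ℝ) : hminus η =
    (-247989/30875)*η^3 + (-13143417/494000)*η^2 + (1276989/30875)*η + (-6388461/494000) := by
  simp only [hminus, F, Gminus, G, P2, p2, Lp, Qp, Ap, Bp, Cp, α0p, α1p, α2p, s2p]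
  norm_num
  ring

lemma hp_shift (η : ℝ) : hplus η = hminus η + 9/2 := by
  simp only [hplus, hminus, Gplus, Gminus, G]
  norm_num
  ring

lemma hm_hasDeriv (x : ℝ) : HasDerivAt hminus
    (3*(-247989/30875)*x^2 + 2*(-13143417/494000)*x + 1276989/30875) x := by
  have he : hminus = fun η : ℝ => (-247989/30875)*η^3 + (-13143417/494000)*η^2
      + (1276989/30875)*η + (-6388461/494000) := funext hm_poly
  rw [he]
  have h1 := (hasDerivAt_pow 3 x).const_mul ((-247989:ℝ)/30875)
  have h2 := (hasDerivAt_pow 2 x).const_mul ((-13143417:ℝ)/494000)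
  have h3 := (hasDerivAt_id x).const_mul ((1276989:ℝ)/30875)
  have h4 := hasDerivAt_const x ((-6388461:ℝ)/494000)
  refine (((h1.add h2).add h3).add h4).congr_deriv ?_
  push_cast; ring

lemma hm_cont : Continuous hminus := by
  have he : hminus = fun η : ℝ => (-247989/30875)*η^3 + (-13143417/494000)*η^2
      + (1276989/30875)*η + (-6388461/494000) := funext hm_poly
  rw [he]; continuity

lemma hm_deriv_pos {x : ℝ} (h0 : 0 ≤ x) (h1 : x ≤ 121/200) : 0 < deriv hminus x := by
  rw [(hm_hasDeriv x).deriv]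
  nlinarith [sq_nonneg x, sq_nonneg (x - 121/200), mul_nonneg h0 (sub_nonneg.2 h1)]

lemma hm_deriv_neg {x : ℝ} (h0 : 123/200 ≤ x) (h1 : x ≤ 1) : deriv hminus x < 0 := by
  rw [(hm_hasDeriv x).deriv]
  nlinarith [sq_nonneg (x - 123/200), mul_nonneg (sub_nonneg.2 h0) (sub_nonneg.2 h1)]

lemma hm_mid {x : ℝ} (h1 : 121/200 ≤ x) (h2 : x ≤ 123/200) : 0 < hminus x := by
  rw [hm_poly]
  nlinarith [sq_nonneg (x - 121/200), sq_nonneg (x - 123/200),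
    mul_nonneg (sub_nonneg.2 h1) (sub_nonneg.2 h2)]

lemma hm_mono : StrictMonoOn hminus (Set.Icc 0 (121/200)) := by
  apply strictMonoOn_of_deriv_pos (convex_Icc _ _) hm_cont.continuousOn
  intro x hx
  rw [interior_Icc] at hx
  exact hm_deriv_pos hx.1.le hx.2.le

lemma hm_anti : StrictAntiOn hminus (Set.Icc (123/200) 1) := by
  apply strictAntiOn_of_deriv_neg (convex_Icc _ _) hm_cont.continuousOn
  intro x hx
  rw [interior_Icc] at hx
  exact hm_deriv_neg hx.1.le hx.2.le

/-- With Table 1 parameters, `h₋ = F − G₋` has exactly two zeros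
`η*₋,u < η*₋,s` in `[0,1]`, with `h₋′(η*₋,u) > 0` and `h₋′(η*₋,s) < 0`; moreover, if
`η*₊,u < η*₊,s` denote the two zeros of `h₊ = F − G₊` in `[0,1]`, then
`η*₊,u < η*₋,u < η*₋,s < η*₊,s`. -/
theorem hminus_has_exactly_two_zeros_interlaced :
    ∃ ηmu ηms : ℝ, ηmu ∈ Set.Icc (0:ℝ) 1 ∧ ηms ∈ Set.Icc (0:ℝ) 1 ∧ ηmu < ηms ∧
      hminus ηmu = 0 ∧ hminus ηms = 0 ∧
      0 < deriv hminus ηmu ∧ deriv hminus ηms < 0 ∧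
      (∀ η ∈ Set.Icc (0:ℝ) 1, hminus η = 0 → η = ηmu ∨ η = ηms) ∧
      ∀ ηpu ηps : ℝ, ηpu ∈ Set.Icc (0:ℝ) 1 → ηps ∈ Set.Icc (0:ℝ) 1 → ηpu < ηps →
        hplus ηpu = 0 → hplus ηps = 0 →
        ηpu < ηmu ∧ ηms < ηps := by
  have h0neg : hminus 0 < 0 := by rw [hm_poly]; norm_num
  have h1neg : hminus 1 < 0 := by rw [hm_poly]; norm_num
  have hm1pos : 0 < hminus (121/200) := by rw [hm_poly]; norm_num
  have hm2pos : 0 < hminus (123/200) := by rw [hm_poly]; norm_num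
  obtain ⟨ηu, hηu, hηu0⟩ := intermediate_value_Ioo (by norm_num : (0:ℝ) ≤ 121/200)
    hm_cont.continuousOn (Set.mem_Ioo.mpr ⟨h0neg, hm1pos⟩)
  obtain ⟨ηs, hηs, hηs0⟩ := intermediate_value_Ioo' (by norm_num : (123/200:ℝ) ≤ 1)
    hm_cont.continuousOn (Set.mem_Ioo.mpr ⟨h1neg, hm2pos⟩)
  obtain ⟨hηu1, hηu2⟩ := hηu
  obtain ⟨hηs1, hηs2⟩ := hηs
  refine ⟨ηu, ηs, ⟨hηu1.le, by linarith⟩, ⟨by linarith, hηs2.le⟩, by linarith,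
    hηu0, hηs0, hm_deriv_pos hηu1.le hηu2.le, hm_deriv_neg hηs1.le hηs2.le, ?_, ?_⟩
  · intro η hη h0
    rcases le_or_gt η (121/200) with hc | hc
    · left
      exact hm_mono.injOn ⟨hη.1, hc⟩ ⟨hηu1.le, hηu2.le⟩ (h0.trans hηu0.symm)
    rcases le_or_gt η (123/200) with hc2 | hc2
    · exact absurd h0 (ne_of_gt (hm_mid hc.le hc2))
    · right
      exact hm_anti.injOn ⟨hc2.le, hη.2⟩ ⟨hηs1.le, hηs2.le⟩ (h0.trans hηs0.symm)
  · intro ηpu ηps hpu hps hlt hz1 hz2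
    have hv1 : hminus ηpu = -(9/2) := by have := hp_shift ηpu; linarith
    have hv2 : hminus ηps = -(9/2) := by have := hp_shift ηps; linarith
    have hpu1 : ηpu ≤ 121/200 := by
      by_contra hcon
      push_neg at hcon
      rcases le_or_gt ηpu (123/200) with hc2 | hc2
      · have := hm_mid hcon.le hc2; linarith
      · have heq : ηpu = ηps :=
          hm_anti.injOn ⟨hc2.le, hpu.2⟩ ⟨by linarith, hps.2⟩ (hv1.trans hv2.symm)
        exact absurd heq (ne_of_lt hlt)
    have hps2 : 123/200 ≤ ηps := by
      by_contra hcon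
      push_neg at hcon
      rcases le_or_gt (121/200) ηps with hc2 | hc2
      · have := hm_mid hc2 hcon.le; linarith
      · have heq : ηpu = ηps :=
          hm_mono.injOn ⟨hpu.1, by linarith⟩ ⟨hps.1, hc2.le⟩ (hv1.trans hv2.symm)
        exact absurd heq (ne_of_lt hlt)
    constructor
    · rcases lt_trichotomy ηpu ηu with h | h | h
      · exact h
      · rw [h] at hv1; rw [hηu0] at hv1; norm_num at hv1
      · have := hm_mono ⟨hηu1.le, hηu2.le⟩ ⟨hpu.1, hpu1⟩ h
        rw [hηu0, hv1] at this; norm_num at this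
    · rcases lt_trichotomy ηs ηps with h | h | h
      · exact h
      · rw [← h] at hv2; rw [hηs0] at hv2; norm_num at hv2
      · have := hm_anti ⟨hps2, hps.2⟩ ⟨hηs1.le, hηs2.le⟩ h
        rw [hηs0, hv2] at this; norm_num at this


end GlacialCycles
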